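/- Let λ and β be positive random variables on a probability space (Ω, 𝓕, ℙ) satisfying 𝔼[(β/λ^{1/β}) ((β+1)/β)^{(β+1)/β}] < ∞. Then the mixed Kies density f(t) = 𝔼[h(t; λ, β)] tends to 0 as t → 1−. -/

import Mathlib

open MeasureTheory Filter Set

lemma exp_neg_le_rpow (x k : ℝ) (hx : 0 < x) (hk : 0 < k) :
    Real.exp (-x) ≤ k ^ k / x ^ k := by
  rw [le_div_iff₀ (Real.rpow_pos_of_pos hx k)]
  have h2 : x / k ≤ Real.exp (x / k - 1) := by
    have := Real.add_one_le_exp (x / k - 1); linarith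
  have h1 : x ^ k ≤ k ^ k * Real.exp x := by
    calc x ^ k = (k * (x / k)) ^ k := by rw [mul_div_cancel₀ _ hk.ne']
    _ = k ^ k * (x / k) ^ k := Real.mul_rpow hk.le (by positivity)
    _ ≤ k ^ k * (Real.exp (x / k - 1)) ^ k := by
        gcongr
    _ = k ^ k * Real.exp ((x / k - 1) * k) := by rw [← Real.exp_mul]
    _ ≤ k ^ k * Real.exp x := by
        gcongr
        have : (x / k - 1) * k = x - k := by field_simp
        rw [this]; linarith
  rw [Real.exp_neg, mul_comm, ← div_eq_mul_inv, div_le_iff₀ (Real.exp_pos x)]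
  linarith [h1]

lemma kies_key (l b c t : ℝ) (hl : 0 < l) (hb : 0 < b) (hc : 0 < c)
    (ht : 0 < t) (ht1 : t < 1) :
    l * b * t ^ (b - 1) * (1 - t) ^ (-(b + 1)) * Real.exp (-l * (t / (1 - t)) ^ b)
      ≤ b * l ^ (-(c / b)) * ((b + c) / b) ^ ((b + c) / b) * t ^ (-(1 + c)) * (1 - t) ^ (c - 1) := by
  have hu : 0 < 1 - t := by linarith
  set u : ℝ := 1 - t with hudef
  have hs : 0 < t / u := by positivity
  set s : ℝ := t / u with hsdef
  set k : ℝ := (b + c) / b with hkdef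
  have hk : 0 < k := by positivity
  have hx : 0 < l * s ^ b := by positivity
  have h1 : Real.exp (-(l * s ^ b)) ≤ k ^ k / (l * s ^ b) ^ k :=
    exp_neg_le_rpow _ _ hx hk
  have hexp : -l * s ^ b = -(l * s ^ b) := by ring
  rw [hexp]
  have hpre : (0:ℝ) ≤ l * b * t ^ (b - 1) * u ^ (-(b + 1)) := by positivity
  calc l * b * t ^ (b - 1) * u ^ (-(b + 1)) * Real.exp (-(l * s ^ b))
      ≤ l * b * t ^ (b - 1) * u ^ (-(b + 1)) * (k ^ k / (l * s ^ b) ^ k) := by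
        exact mul_le_mul_of_nonneg_left h1 hpre
    _ = b * l ^ (-(c / b)) * k ^ k * t ^ (-(1 + c)) * u ^ (c - 1) := by
        have e1 : (l * s ^ b) ^ k = l ^ k * s ^ (b + c) := by
          rw [Real.mul_rpow hl.le (by positivity), ← Real.rpow_mul hs.le]
          congr 1
          rw [hkdef, mul_div_cancel₀ _ hb.ne']
        have e2 : s ^ (b + c) = t ^ (b + c) / u ^ (b + c) :=
          Real.div_rpow ht.le hu.le _
        have e3 : l ^ k = l * l ^ (c / b) := by
          have : k = 1 + c / b := by rw [hkdef, add_div, div_self hb.ne']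
          rw [this, Real.rpow_add hl, Real.rpow_one]
        have e4 : t ^ (b + c) = t ^ (b - 1) * t ^ (1 + c) := by
          rw [← Real.rpow_add ht]; ring_nf
        have e5 : u ^ (b + c) = u ^ (b + 1) * u ^ (c - 1) := by
          rw [← Real.rpow_add hu]; ring_nf
        rw [e1, e2, e3, e4, e5, Real.rpow_neg hu.le, Real.rpow_neg hl.le,
          Real.rpow_neg ht.le]
        have p1 : t ^ (b - 1) ≠ 0 := by positivity
        have p2 : t ^ (1 + c) ≠ 0 := by positivity
        have p3 : u ^ (b + 1) ≠ 0 := by positivity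
        have p4 : u ^ (c - 1) ≠ 0 := by positivity
        have p5 : l ^ (c / b) ≠ 0 := by positivity
        field_simp

theorem mixed_kies_density_right_endpoint
    {Ω : Type*} [MeasurableSpace Ω] (μ : Measure Ω) [IsProbabilityMeasure μ]
    (lam beta : Ω → ℝ) (hlam_meas : Measurable lam) (hbeta_meas : Measurable beta)
    (hlam_pos : ∀ ω, 0 < lam ω) (hbeta_pos : ∀ ω, 0 < beta ω)
    (hcond : Integrable (fun ω =>
        beta ω / lam ω ^ (1 / beta ω) *
          ((beta ω + 1) / beta ω) ^ ((beta ω + 1) / beta ω)) μ)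
    (f : ℝ → ℝ)
    (hf : ∀ t, f t = ∫ ω, lam ω * beta ω * t ^ (beta ω - 1) * (1 - t) ^ (-(beta ω + 1)) *
        Real.exp (-(lam ω) * (t / (1 - t)) ^ (beta ω)) ∂μ) :
    Tendsto f (nhdsWithin 1 (Set.Iio 1)) (nhds 0) := by
  have hIoo : Ioo (1/2 : ℝ) 1 ∈ nhdsWithin (1:ℝ) (Iio 1) :=
    Ioo_mem_nhdsLT_of_mem (by constructor <;> norm_num)
  set g : ℝ → Ω → ℝ := fun t ω =>
    lam ω * beta ω * t ^ (beta ω - 1) * (1 - t) ^ (-(beta ω + 1)) *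
      Real.exp (-(lam ω) * (t / (1 - t)) ^ (beta ω)) with hg
  have hmeas : ∀ᶠ t in nhdsWithin (1:ℝ) (Iio 1), AEStronglyMeasurable (g t) μ := by
    filter_upwards [hIoo] with t ht
    have ht0 : 0 < t := lt_trans (by norm_num) ht.1
    have hu : 0 < 1 - t := by linarith [ht.2]
    have hsu : 0 < t / (1 - t) := by positivity
    have m1 : Measurable fun ω => t ^ (beta ω - 1) := by
      simp_rw [Real.rpow_def_of_pos ht0]
      exact ((hbeta_meas.sub measurable_const).const_mul _).exp
    have m2 : Measurable fun ω => (1 - t) ^ (-(beta ω + 1)) := by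
      simp_rw [Real.rpow_def_of_pos hu]
      exact ((hbeta_meas.add measurable_const).neg.const_mul _).exp
    have m3 : Measurable fun ω => (t / (1 - t)) ^ (beta ω) := by
      simp_rw [Real.rpow_def_of_pos hsu]
      exact (hbeta_meas.const_mul _).exp
    exact ((((hlam_meas.mul hbeta_meas).mul m1).mul m2).mul
      ((hlam_meas.neg.mul m3).exp)).aestronglyMeasurable
  have hbound : ∀ᶠ t in nhdsWithin (1:ℝ) (Iio 1), ∀ᵐ ω ∂μ, ‖g t ω‖ ≤
      4 * (beta ω / lam ω ^ (1 / beta ω) *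
        ((beta ω + 1) / beta ω) ^ ((beta ω + 1) / beta ω)) := by
    filter_upwards [hIoo] with t ht
    refine ae_of_all _ fun ω => ?_
    have ht0 : 0 < t := lt_trans (by norm_num) ht.1
    have ht1 : t < 1 := ht.2
    have hu : 0 < 1 - t := by linarith
    have hl := hlam_pos ω
    have hb := hbeta_pos ω
    have hnn : 0 ≤ g t ω := by rw [hg]; positivity
    rw [Real.norm_eq_abs, abs_of_nonneg hnn]
    have hkk := kies_key (lam ω) (beta ω) 1 t hl hb one_pos ht0 ht1
    have h2 : t ^ (-(1+1):ℝ) ≤ 4 := by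
      have e : (-(1+1):ℝ) = ((-2 : ℤ) : ℝ) := by norm_num
      rw [e, Real.rpow_intCast]
      rw [zpow_neg, show ((2:ℤ)) = ((2:ℕ) : ℤ) by norm_num, zpow_natCast]
      rw [inv_le_iff_one_le_mul₀ (by positivity)]
      nlinarith [ht.1]
    have hC : (0:ℝ) ≤ beta ω * lam ω ^ (-(1 / beta ω)) *
        ((beta ω + 1) / beta ω) ^ ((beta ω + 1) / beta ω) := by positivity
    calc g t ω ≤ beta ω * lam ω ^ (-(1 / beta ω)) *
          ((beta ω + 1) / beta ω) ^ ((beta ω + 1) / beta ω) * t ^ (-(1+1):ℝ) *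
          (1 - t) ^ ((1:ℝ) - 1) := hkk
      _ = beta ω * lam ω ^ (-(1 / beta ω)) *
          ((beta ω + 1) / beta ω) ^ ((beta ω + 1) / beta ω) * t ^ (-(1+1):ℝ) := by
          rw [show ((1:ℝ) - 1) = 0 by norm_num, Real.rpow_zero, mul_one]
      _ ≤ beta ω * lam ω ^ (-(1 / beta ω)) *
          ((beta ω + 1) / beta ω) ^ ((beta ω + 1) / beta ω) * 4 :=
          mul_le_mul_of_nonneg_left h2 hC
      _ = 4 * (beta ω / lam ω ^ (1 / beta ω) *
          ((beta ω + 1) / beta ω) ^ ((beta ω + 1) / beta ω)) := by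
          rw [Real.rpow_neg hl.le]; ring
  have hint : Integrable (fun ω => 4 * (beta ω / lam ω ^ (1 / beta ω) *
      ((beta ω + 1) / beta ω) ^ ((beta ω + 1) / beta ω))) μ := hcond.const_mul 4
  have hlim : ∀ᵐ ω ∂μ, Tendsto (fun t => g t ω) (nhdsWithin (1:ℝ) (Iio 1)) (nhds 0) := by
    refine ae_of_all _ fun ω => ?_
    have hl := hlam_pos ω
    have hb := hbeta_pos ω
    set D : ℝ := beta ω * lam ω ^ (-(2 / beta ω)) *
      ((beta ω + 2) / beta ω) ^ ((beta ω + 2) / beta ω) with hD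
    have hDnn : 0 ≤ D := by rw [hD]; positivity
    refine squeeze_zero' ?_ ?_ (g := fun t : ℝ => D * t ^ (-(1+2):ℝ) * (1 - t) ^ ((2:ℝ) - 1)) ?_
    · filter_upwards [hIoo] with t ht
      have ht0 : 0 < t := lt_trans (by norm_num) ht.1
      have hu : 0 < 1 - t := by linarith [ht.2]
      rw [hg]; positivity
    · filter_upwards [hIoo] with t ht
      have ht0 : 0 < t := lt_trans (by norm_num) ht.1
      exact kies_key (lam ω) (beta ω) 2 t hl hb two_pos ht0 ht.2
    · have e1 : Tendsto (fun t : ℝ => t ^ (-(1+2):ℝ)) (nhdsWithin (1:ℝ) (Iio 1))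
          (nhds ((1:ℝ) ^ (-(1+2):ℝ))) :=
        ((Real.continuousAt_rpow_const 1 (-(1+2)) (Or.inl one_ne_zero)).tendsto).mono_left
          nhdsWithin_le_nhds
      have e2 : Tendsto (fun t : ℝ => (1 - t) ^ ((2:ℝ) - 1)) (nhdsWithin (1:ℝ) (Iio 1))
          (nhds 0) := by
        have : Tendsto (fun t : ℝ => 1 - t) (nhdsWithin (1:ℝ) (Iio 1)) (nhds 0) := by
          have h : Continuous (fun t : ℝ => 1 - t) := by continuity
          simpa using (h.tendsto 1).mono_left nhdsWithin_le_nhds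
        have e3 : (fun t : ℝ => (1 - t) ^ ((2:ℝ) - 1)) = fun t : ℝ => 1 - t := by
          funext t; rw [show ((2:ℝ) - 1) = 1 by norm_num, Real.rpow_one]
        rw [e3]; exact this
      have := (tendsto_const_nhds (x := D)).mul e1 |>.mul e2
      simpa using this
  have key := tendsto_integral_filter_of_dominated_convergence
    (μ := μ) (l := nhdsWithin (1:ℝ) (Iio 1)) (F := g) (f := fun _ => (0:ℝ))
    _ hmeas hbound hint hlim
  rw [integral_zero] at key
  have : f = fun t => ∫ ω, g t ω ∂μ := funext hf
  rw [this]
  exact key
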